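/- Let n = (n_k) be a strictly increasing sequence of natural numbers with l-bounded gaps (n_{k+1} ≤ l·n_k for all k), and let B = (e_i) be a semi-normalized Schauder basis of a Banach space X with basis constant K and with sup‖e_i‖ = α₁, sup‖e_i*‖ = α₂. If B is K_u-n-unconditional for constant coefficients (i.e. ‖1_{εA}‖ ≤ K_u‖1_{ε'A}‖ whenever |A| ∈ n and ε, ε' are sign sequences on A), then B is C_u-unconditional for constant coefficients (the same inequality for all finite A) with C_u ≤ max{n₁α₁α₂, (2l−1)K_u·K}. -/

import Mathlib

open Finset

lemma aux_cut (A : Finset ℕ) : ∀ s, s ≤ A.card → ∃ c, (A.filter (· < c)).card = s := by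
  intro s
  induction s with
  | zero => intro _; exact ⟨0, by simp⟩
  | succ n ih =>
    intro hs
    obtain ⟨c, hc⟩ := ih (by omega)
    have hTcard : (A.filter (fun i => ¬ i < c)).card = A.card - n := by
      have := Finset.card_filter_add_card_filter_not (s := A) (p := (· < c))
      omega
    have hT : (A.filter (fun i => ¬ i < c)).Nonempty := by
      rw [← Finset.card_pos, hTcard]; omega
    set j := (A.filter (fun i => ¬ i < c)).min' hT with hj
    have hjmem := (A.filter (fun i => ¬ i < c)).min'_mem hT
    rw [Finset.mem_filter] at hjmem
    refine ⟨j + 1, ?_⟩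
    have hset : A.filter (· < j + 1) = insert j (A.filter (· < c)) := by
      ext i
      simp only [Finset.mem_filter, Finset.mem_insert]
      constructor
      · rintro ⟨hiA, hij⟩
        by_cases hic : i < c
        · exact Or.inr ⟨hiA, hic⟩
        · left
          have : j ≤ i := Finset.min'_le _ _ (Finset.mem_filter.mpr ⟨hiA, hic⟩)
          omega
      · rintro (rfl | ⟨hiA, hic⟩)
        · exact ⟨hjmem.1, by omega⟩
        · exact ⟨hiA, by omega⟩
    rw [hset, Finset.card_insert_of_notMem (by intro h; rw [Finset.mem_filter] at h; exact absurd h.2 (by rw [hj]; exact hjmem.2)), hc]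

lemma aux_nest (A : Finset ℕ) {c c' : ℕ}
    (h : (A.filter (· < c)).card ≤ (A.filter (· < c')).card) :
    A.filter (· < c) ⊆ A.filter (· < c') := by
  rcases le_total c c' with hcc | hcc
  · intro i hi
    rw [Finset.mem_filter] at *
    exact ⟨hi.1, by omega⟩
  · have hsub : A.filter (· < c') ⊆ A.filter (· < c) := by
      intro i hi
      rw [Finset.mem_filter] at *
      exact ⟨hi.1, by omega⟩
    rw [Finset.eq_of_subset_of_card_le hsub h]

/-- For a sequence `nseq` with `l`-bounded gaps and a semi-normalized Schauder
basis with basis constant `K`, `Ku`-`n`-unconditionality for constant coefficients implies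
unconditionality for constant coefficients with constant `max (n₁ α₁ α₂) ((2l-1) Ku K)`. -/
theorem stmt0
    {X : Type*} [NormedAddCommGroup X] [NormedSpace ℝ X]
    (e : ℕ → X) (f : ℕ → X →L[ℝ] ℝ)
    (hbi : ∀ i j, f i (e j) = if i = j then (1 : ℝ) else 0)
    (α₁ α₂ : ℝ) (hα₁pos : 0 < α₁) (hα₂pos : 0 < α₂)
    (hα₁ : ∀ i, ‖e i‖ ≤ α₁) (hα₂ : ∀ i, ‖f i‖ ≤ α₂)
    (K : ℝ) (hKpos : 0 < K)
    (hSch : ∀ (x : X) (m : ℕ), ‖∑ i ∈ Finset.range m, f i x • e i‖ ≤ K * ‖x‖)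
    (nseq : ℕ → ℕ) (hmono : StrictMono nseq) (hn1 : 0 < nseq 0)
    (l : ℕ) (hl : 2 ≤ l) (hgaps : ∀ k, nseq (k + 1) ≤ l * nseq k)
    (Ku : ℝ) (hKu : 0 < Ku)
    (hucc : ∀ (A : Finset ℕ) (ε ε' : ℕ → ℝ),
      (∃ k, A.card = nseq k) → (∀ i ∈ A, |ε i| = 1) → (∀ i ∈ A, |ε' i| = 1) →
      ‖∑ i ∈ A, ε i • e i‖ ≤ Ku * ‖∑ i ∈ A, ε' i • e i‖) :
    ∀ (A : Finset ℕ) (ε ε' : ℕ → ℝ),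
      (∀ i ∈ A, |ε i| = 1) → (∀ i ∈ A, |ε' i| = 1) →
      ‖∑ i ∈ A, ε i • e i‖ ≤
        max ((nseq 0 : ℝ) * α₁ * α₂) ((2 * (l : ℝ) - 1) * Ku * K) *
          ‖∑ i ∈ A, ε' i • e i‖ := by
  intro A ε ε' hε hε'
  -- coefficient evaluation
  have coeff : ∀ (B : Finset ℕ) (η : ℕ → ℝ) (i : ℕ),
      f i (∑ j ∈ B, η j • e j) = if i ∈ B then η i else 0 := by
    intro B η i
    rw [map_sum]
    simp only [map_smul, hbi, smul_eq_mul, mul_ite, mul_one, mul_zero]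
    exact Finset.sum_ite_eq B i η
  -- projection identity
  have proj : ∀ (B : Finset ℕ) (η : ℕ → ℝ) (c : ℕ),
      ∑ i ∈ Finset.range c, f i (∑ j ∈ B, η j • e j) • e i
        = ∑ j ∈ B.filter (· < c), η j • e j := by
    intro B η c
    have h1 : ∀ i ∈ Finset.range c,
        f i (∑ j ∈ B, η j • e j) • e i = if i ∈ B then η i • e i else 0 := by
      intro i _
      rw [coeff]
      split <;> simp
    rw [Finset.sum_congr rfl h1, Finset.sum_ite_mem]
    apply Finset.sum_congr _ (fun _ _ => rfl)
    ext i
    simp only [Finset.mem_inter, Finset.mem_range, Finset.mem_filter]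
    tauto
  -- projection norm bound
  have projK : ∀ (η : ℕ → ℝ) (c : ℕ),
      ‖∑ j ∈ A.filter (· < c), η j • e j‖ ≤ K * ‖∑ j ∈ A, η j • e j‖ := by
    intro η c
    rw [← proj A η c]
    exact hSch _ c
  -- lower bound on the norm of a sign sum
  have lowbd : A.Nonempty → 1 ≤ α₂ * ‖∑ j ∈ A, ε' j • e j‖ := by
    intro ⟨i, hi⟩
    have h1 : |f i (∑ j ∈ A, ε' j • e j)| = 1 := by
      rw [coeff, if_pos hi]; exact hε' i hi
    calc (1:ℝ) = |f i (∑ j ∈ A, ε' j • e j)| := h1.symm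
    _ ≤ ‖f i‖ * ‖∑ j ∈ A, ε' j • e j‖ := (f i).le_opNorm _
    _ ≤ α₂ * ‖∑ j ∈ A, ε' j • e j‖ :=
        mul_le_mul_of_nonneg_right (hα₂ i) (norm_nonneg _)
  set N := ‖∑ i ∈ A, ε' i • e i‖ with hN
  have hN0 : 0 ≤ N := norm_nonneg _
  by_cases hsmall : A.card < nseq 0
  · -- small case
    rcases A.eq_empty_or_nonempty with rfl | hAne
    · simp only [Finset.sum_empty, norm_zero]
      positivity
    have h1 : ‖∑ i ∈ A, ε i • e i‖ ≤ (A.card : ℝ) * α₁ := by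
      calc ‖∑ i ∈ A, ε i • e i‖ ≤ ∑ i ∈ A, ‖ε i • e i‖ := norm_sum_le _ _
      _ ≤ ∑ i ∈ A, α₁ := by
          apply Finset.sum_le_sum
          intro i hi
          rw [norm_smul, Real.norm_eq_abs, hε i hi, one_mul]
          exact hα₁ i
      _ = (A.card : ℝ) * α₁ := by rw [Finset.sum_const, nsmul_eq_mul]
    have h2 := lowbd hAne
    have h3 : (A.card : ℝ) ≤ (nseq 0 : ℝ) := by exact_mod_cast hsmall.le
    have h4 : ‖∑ i ∈ A, ε i • e i‖ ≤ (nseq 0 : ℝ) * α₁ * α₂ * N := by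
      nlinarith [mul_le_mul_of_nonneg_left h2 (by positivity : (0:ℝ) ≤ (A.card:ℝ) * α₁),
        mul_le_mul_of_nonneg_right h3 (by positivity : (0:ℝ) ≤ α₁ * α₂ * N)]
    exact h4.trans (mul_le_mul_of_nonneg_right (le_max_left _ _) hN0)
  · push_neg at hsmall
    -- find k with nseq k ≤ card A < nseq (k+1)
    have hex : ∃ k, A.card < nseq k :=
      ⟨A.card + 1, lt_of_lt_of_le (Nat.lt_succ_self _) (hmono.le_apply)⟩
    set k0 := Nat.find hex with hk0
    have hk0pos : 0 < k0 := by
      rcases Nat.eq_zero_or_pos k0 with h0 | h0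
      · exfalso
        have := Nat.find_spec hex
        rw [← hk0, h0] at this
        omega
      · exact h0
    set k := k0 - 1 with hkdef
    have hk1 : nseq k ≤ A.card := by
      have := Nat.find_min hex (m := k) (by omega)
      omega
    have hk2 : A.card < nseq (k + 1) := by
      have := Nat.find_spec hex
      rw [← hk0] at this
      have hkk : k + 1 = k0 := by omega
      rwa [hkk]
    set m := A.card with hm
    set nk := nseq k with hnk
    have hnk0 : 0 < nk := lt_of_lt_of_le hn1 (hmono.monotone (Nat.zero_le k))
    set q := m / nk with hq
    have hq1 : 1 ≤ q := (Nat.le_div_iff_mul_le hnk0).mpr (by rwa [one_mul])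
    have hql : q < l := (Nat.div_lt_iff_lt_mul hnk0).mpr (lt_of_lt_of_le hk2 (hgaps k))
    have hP1 : q * nk ≤ m := Nat.div_mul_le_self m nk
    have hP2 : m < q * nk + nk := by
      by_contra hcon
      push_neg at hcon
      have : q + 1 ≤ m / nk :=
        (Nat.le_div_iff_mul_le hnk0).mpr (by rw [add_mul, one_mul]; exact hcon)
      omega
    -- cut points
    have hcse : ∀ j : ℕ, ∃ c, (A.filter (· < c)).card = min (j * nk) m :=
      fun j => aux_cut A _ (min_le_right _ _)
    choose cs hcs using hcse
    have hcsle : ∀ j, j ≤ q → (A.filter (· < cs j)).card = j * nk := by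
      intro j hj
      rw [hcs]
      apply min_eq_left
      calc j * nk ≤ q * nk := by gcongr
      _ ≤ m := hP1
    -- the block norm bound
    have blk : ∀ (c c' : ℕ) (η : ℕ → ℝ), (∀ i ∈ A, |η i| = 1) →
        (A.filter (· < c)).card ≤ (A.filter (· < c')).card →
        (∃ k', ((A.filter (· < c')) \ (A.filter (· < c))).card = nseq k') →
        ‖∑ i ∈ (A.filter (· < c')) \ (A.filter (· < c)), η i • e i‖ ≤ Ku * (2 * K) * N := by
      intro c c' η hη hcard hk'
      set B := (A.filter (· < c')) \ (A.filter (· < c)) with hB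
      have hBA : B ⊆ A := Finset.sdiff_subset.trans (Finset.filter_subset _ _)
      have h1 := hucc B η ε' hk' (fun i hi => hη i (hBA hi)) (fun i hi => hε' i (hBA hi))
      have hsub := aux_nest A hcard
      have h2 : ∑ i ∈ B, ε' i • e i
          = (∑ i ∈ A.filter (· < c'), ε' i • e i) - ∑ i ∈ A.filter (· < c), ε' i • e i := by
        rw [eq_sub_iff_add_eq, hB, Finset.sum_sdiff hsub]
      have h3 : ‖∑ i ∈ B, ε' i • e i‖ ≤ 2 * K * N := by
        rw [h2]
        calc ‖(∑ i ∈ A.filter (· < c'), ε' i • e i) - ∑ i ∈ A.filter (· < c), ε' i • e i‖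
            ≤ ‖∑ i ∈ A.filter (· < c'), ε' i • e i‖ + ‖∑ i ∈ A.filter (· < c), ε' i • e i‖ :=
              norm_sub_le _ _
        _ ≤ K * N + K * N := add_le_add (projK ε' c') (projK ε' c)
        _ = 2 * K * N := by ring
      calc ‖∑ i ∈ B, η i • e i‖ ≤ Ku * ‖∑ i ∈ B, ε' i • e i‖ := h1
      _ ≤ Ku * (2 * K * N) := mul_le_mul_of_nonneg_left h3 hKu.le
      _ = Ku * (2 * K) * N := by ring
    -- the telescoping decomposition
    set g : ℕ → X := fun j => ∑ i ∈ A.filter (· < cs j), ε i • e i with hgdef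
    have hg0 : g 0 = 0 := by
      have : (A.filter (· < cs 0)).card = 0 := by
        rw [hcs]; simp
      rw [hgdef]
      simp only
      rw [Finset.card_eq_zero.mp this, Finset.sum_empty]
    have hsubj : ∀ j, j < q → A.filter (· < cs j) ⊆ A.filter (· < cs (j + 1)) := by
      intro j hj
      apply aux_nest
      rw [hcsle j hj.le, hcsle (j + 1) hj]
      gcongr
      omega
    have hgdiff : ∀ j, j < q →
        g (j + 1) - g j = ∑ i ∈ (A.filter (· < cs (j + 1))) \ (A.filter (· < cs j)), ε i • e i := by
      intro j hj
      rw [sub_eq_iff_eq_add, hgdef]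
      simp only
      rw [Finset.sum_sdiff (hsubj j hj)]
    have hcarddiff : ∀ j, j < q →
        ((A.filter (· < cs (j + 1))) \ (A.filter (· < cs j))).card = nk := by
      intro j hj
      rw [Finset.card_sdiff_of_subset (hsubj j hj), hcsle j hj.le, hcsle (j + 1) hj, Nat.succ_mul]
      omega
    -- per-block bounds
    have hblockbd : ∀ j ∈ Finset.range q,
        ‖g (j + 1) - g j‖ ≤ Ku * (2 * K) * N + (if j = 0 then Ku * K * N - Ku * (2 * K) * N else 0) := by
      intro j hjr
      rw [Finset.mem_range] at hjr
      rw [hgdiff j hjr]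
      by_cases hj0 : j = 0
      · subst hj0
        simp only [if_pos rfl]
        have hF0 : A.filter (· < cs 0) = ∅ := by
          apply Finset.card_eq_zero.mp
          rw [hcs]; simp
        rw [hF0, Finset.sdiff_empty]
        have hc1 : (A.filter (· < cs 1)).card = nseq k := by
          rw [hcsle 1 hq1, one_mul]
        have h1 := hucc (A.filter (· < cs 1)) ε ε' ⟨k, hc1⟩
          (fun i hi => hε i (Finset.filter_subset _ _ hi))
          (fun i hi => hε' i (Finset.filter_subset _ _ hi))
        calc ‖∑ i ∈ A.filter (· < cs 1), ε i • e i‖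
            ≤ Ku * ‖∑ i ∈ A.filter (· < cs 1), ε' i • e i‖ := h1
        _ ≤ Ku * (K * N) := mul_le_mul_of_nonneg_left (projK ε' (cs 1)) hKu.le
        _ = Ku * (2 * K) * N + (Ku * K * N - Ku * (2 * K) * N) := by ring
      · simp only [if_neg hj0, add_zero]
        apply blk
        · exact (fun i hi => hε i hi)
        · rw [hcsle j hjr.le, hcsle (j + 1) hjr]
          gcongr
          omega
        · exact ⟨k, hcarddiff j hjr⟩
    -- the remainder set
    obtain ⟨cJ, hcJ⟩ := aux_cut A (m - nk) (Nat.sub_le _ _)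
    set M := A.sup id + 1 with hM
    have hFM : A.filter (· < M) = A := by
      apply Finset.filter_true_of_mem
      intro i hi
      have : i ≤ A.sup id := Finset.le_sup (f := id) hi
      omega
    have hFMcard : (A.filter (· < M)).card = m := by rw [hFM]
    have hFJq : A.filter (· < cJ) ⊆ A.filter (· < cs q) := by
      apply aux_nest
      rw [hcJ, hcsle q le_rfl]
      omega
    set J := (A.filter (· < M)) \ (A.filter (· < cJ)) with hJ
    have hJcard : J.card = nk := by
      rw [hJ, Finset.card_sdiff_of_subset (by rw [hFM]; exact Finset.filter_subset _ _), hFMcard, hcJ]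
      omega
    set R := A \ (A.filter (· < cs q)) with hR
    set τ : ℕ → ℝ := fun i => if i ∈ A.filter (· < cs q) then ε i else -ε i with hτdef
    have hτ : ∀ i ∈ A, |τ i| = 1 := by
      intro i hi
      rw [hτdef]
      simp only
      split
      · exact hε i hi
      · rw [abs_neg]; exact hε i hi
    have hident : (∑ i ∈ J, ε i • e i) - (∑ i ∈ J, τ i • e i)
        = (2 : ℝ) • ∑ i ∈ R, ε i • e i := by
      rw [← Finset.sum_sub_distrib]
      have hterm : ∀ i ∈ J, ε i • e i - τ i • e i
          = if ¬ (i ∈ A.filter (· < cs q)) then ((2 : ℝ) * ε i) • e i else 0 := by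
        intro i _
        rw [hτdef]
        simp only
        by_cases hi : i ∈ A.filter (· < cs q)
        · rw [if_pos hi, if_neg (by simp [hi]), sub_self]
        · rw [if_neg hi, if_pos (by simp [hi]), ← sub_smul]
          ring_nf
      rw [Finset.sum_congr rfl hterm, ← Finset.sum_filter]
      have hMlt : ∀ i ∈ A, i < M := by
        intro i hi
        have : i ≤ A.sup id := Finset.le_sup (f := id) hi
        omega
      have hJR : J.filter (fun i => ¬ (i ∈ A.filter (· < cs q))) = R := by
        ext i
        simp only [hJ, hR, Finset.mem_filter, Finset.mem_sdiff]
        constructor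
        · rintro ⟨⟨⟨hiA, _⟩, _⟩, hicq⟩
          exact ⟨hiA, hicq⟩
        · rintro ⟨hiA, hicq⟩
          have hcJq : i < cJ → i < cs q := by
            intro h
            have := hFJq (Finset.mem_filter.mpr ⟨hiA, h⟩)
            exact (Finset.mem_filter.mp this).2
          exact ⟨⟨⟨hiA, hMlt i hiA⟩, fun h => hicq ⟨hiA, hcJq h.2⟩⟩, hicq⟩
      rw [hJR, Finset.smul_sum]
      apply Finset.sum_congr rfl
      intro i _
      rw [smul_smul]
    have hJbd : ∀ (η : ℕ → ℝ), (∀ i ∈ A, |η i| = 1) →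
        ‖∑ i ∈ J, η i • e i‖ ≤ Ku * (2 * K) * N := by
      intro η hη
      rw [hJ]
      apply blk cJ M η hη
      · rw [hcJ, hFMcard]; omega
      · rw [← hJ, hJcard]; exact ⟨k, rfl⟩
    have hRbd : ‖∑ i ∈ R, ε i • e i‖ ≤ Ku * (2 * K) * N := by
      have h2 : ‖(2 : ℝ) • ∑ i ∈ R, ε i • e i‖ = 2 * ‖∑ i ∈ R, ε i • e i‖ := by
        rw [norm_smul]
        norm_num
      have h3 : ‖(2 : ℝ) • ∑ i ∈ R, ε i • e i‖ ≤ 2 * (Ku * (2 * K) * N) := by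
        rw [← hident]
        calc ‖(∑ i ∈ J, ε i • e i) - (∑ i ∈ J, τ i • e i)‖
            ≤ ‖∑ i ∈ J, ε i • e i‖ + ‖∑ i ∈ J, τ i • e i‖ := norm_sub_le _ _
        _ ≤ Ku * (2 * K) * N + Ku * (2 * K) * N := add_le_add (hJbd ε hε) (hJbd τ hτ)
        _ = 2 * (Ku * (2 * K) * N) := by ring
      linarith
    -- assemble
    have hsplit : (∑ i ∈ A, ε i • e i) = g q + ∑ i ∈ R, ε i • e i := by
      rw [hgdef, hR]
      simp only
      rw [add_comm, Finset.sum_sdiff (Finset.filter_subset _ _)]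
    have htel : g q = ∑ j ∈ Finset.range q, (g (j + 1) - g j) := by
      rw [Finset.sum_range_sub g q, hg0, sub_zero]
    have hgqbd : ‖g q‖ ≤ (q : ℝ) * (Ku * (2 * K) * N) + (Ku * K * N - Ku * (2 * K) * N) := by
      rw [htel]
      calc ‖∑ j ∈ Finset.range q, (g (j + 1) - g j)‖
          ≤ ∑ j ∈ Finset.range q, ‖g (j + 1) - g j‖ := norm_sum_le _ _
      _ ≤ ∑ j ∈ Finset.range q,
            (Ku * (2 * K) * N + (if j = 0 then Ku * K * N - Ku * (2 * K) * N else 0)) :=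
          Finset.sum_le_sum hblockbd
      _ = (q : ℝ) * (Ku * (2 * K) * N) + (Ku * K * N - Ku * (2 * K) * N) := by
          rw [Finset.sum_add_distrib, Finset.sum_const, Finset.card_range, nsmul_eq_mul,
            Finset.sum_ite_eq' (Finset.range q) 0 (fun _ => Ku * K * N - Ku * (2 * K) * N),
            if_pos (Finset.mem_range.mpr hq1)]
    have hqlR : (q : ℝ) + 1 ≤ (l : ℝ) := by exact_mod_cast hql
    have hKuKN : 0 ≤ Ku * K * N := by positivity
    have hfinal : ‖∑ i ∈ A, ε i • e i‖ ≤ (2 * (l : ℝ) - 1) * Ku * K * N := by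
      calc ‖∑ i ∈ A, ε i • e i‖ ≤ ‖g q‖ + ‖∑ i ∈ R, ε i • e i‖ := by
            rw [hsplit]; exact norm_add_le _ _
      _ ≤ ((q : ℝ) * (Ku * (2 * K) * N) + (Ku * K * N - Ku * (2 * K) * N))
            + Ku * (2 * K) * N := add_le_add hgqbd hRbd
      _ = (2 * (q : ℝ) + 1) * (Ku * K * N) := by ring
      _ ≤ (2 * (l : ℝ) - 1) * (Ku * K * N) := by nlinarith
      _ = (2 * (l : ℝ) - 1) * Ku * K * N := by ring
    refine hfinal.trans ?_
    apply mul_le_mul_of_nonneg_right _ hN0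
    exact le_max_right _ _
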